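/- Let m(u) = f + g·u + (1/2)u·H·u + (σ/3)‖u‖³ with σ > 0 and δ ∈ (0, 1/6). If u satisfies ‖∇m(u)‖ ≤ δ σ ‖u‖² and u·H·u ≥ -σ‖u‖³, then m(0) - m(u) ≥ (1/6 - δ) σ ‖u‖³. -/
import Mathlib


open Matrix Real BigOperators RealInnerProductSpace

/-- Euclidean norm of a finite-dimensional real vector. -/
noncomputable def eunorm {ι : Type*} [Fintype ι] (x : ι → ℝ) : ℝ :=
  Real.sqrt (∑ i, x i ^ 2)

/-- ℓ¹ norm of a finite-dimensional real vector. -/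
noncomputable def l1norm {ι : Type*} [Fintype ι] (x : ι → ℝ) : ℝ :=
  ∑ i, |x i|

lemma eunorm_nonneg {ι : Type*} [Fintype ι] (x : ι → ℝ) : 0 ≤ eunorm x :=
  Real.sqrt_nonneg _

lemma eunorm_sq {ι : Type*} [Fintype ι] (x : ι → ℝ) : (eunorm x) ^ 2 = x ⬝ᵥ x := by
  rw [eunorm, Real.sq_sqrt (Finset.sum_nonneg fun i _ => sq_nonneg _)]
  simp [dotProduct, sq]

lemma eunorm_cauchy {ι : Type*} [Fintype ι] (x y : ι → ℝ) :
    |x ⬝ᵥ y| ≤ eunorm x * eunorm y := by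
  have h := Finset.sum_mul_sq_le_sq_mul_sq Finset.univ x y
  have : |x ⬝ᵥ y| ^ 2 ≤ (eunorm x * eunorm y) ^ 2 := by
    rw [sq_abs, mul_pow, eunorm_sq, eunorm_sq]
    simpa [dotProduct, sq] using h
  nlinarith [abs_nonneg (x ⬝ᵥ y), mul_nonneg (eunorm_nonneg x) (eunorm_nonneg y)]


theorem stmt1 {n : ℕ} (f σ δ : ℝ) (g u : Fin n → ℝ) (H : Matrix (Fin n) (Fin n) ℝ)
    (hH : H.IsSymm) (hσ : 0 < σ) (hδ0 : 0 < δ) (hδ1 : δ < 1 / 6)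
    (m : (Fin n → ℝ) → ℝ)
    (hm : ∀ d, m d = f + g ⬝ᵥ d + (1 / 2) * (d ⬝ᵥ H.mulVec d) + (σ / 3) * (eunorm d) ^ 3)
    (hgrad : eunorm (g + H.mulVec u + (σ * eunorm u) • u) ≤ δ * σ * (eunorm u) ^ 2)
    (hcurv : u ⬝ᵥ H.mulVec u ≥ -(σ * (eunorm u) ^ 3)) :
    m 0 - m u ≥ (1 / 6 - δ) * σ * (eunorm u) ^ 3 := by
  set N := eunorm u with hN
  have hN0 : 0 ≤ N := eunorm_nonneg u
  have h0 : eunorm (0 : Fin n → ℝ) = 0 := by simp [eunorm]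
  set G := g + H.mulVec u + (σ * N) • u with hG
  have hdot : G ⬝ᵥ u = g ⬝ᵥ u + u ⬝ᵥ H.mulVec u + σ * N * N ^ 2 := by
    simp [hG, add_dotProduct, smul_dotProduct, eunorm_sq, hN,
      dotProduct_comm (H.mulVec u) u, smul_eq_mul]
  have hcs : |G ⬝ᵥ u| ≤ (δ * σ * N ^ 2) * N := by
    calc |G ⬝ᵥ u| ≤ eunorm G * eunorm u := eunorm_cauchy G u
    _ ≤ (δ * σ * N ^ 2) * N := by
        apply mul_le_mul hgrad le_rfl hN0
        positivity
  have habs := abs_le.mp hcs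
  rw [hm 0, hm u, h0]
  simp only [dotProduct_zero, zero_dotProduct, Matrix.mulVec_zero]
  nlinarith [habs.1, habs.2, hcurv, hdot, hN0, sq_nonneg N]
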